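/- Let C > 0 and t₀ ∈ ℝ. Let I : [t₀,∞) → [0,∞) be absolutely continuous and let g : [t₀,∞) → [0,∞) be locally integrable, and assume that for almost every t ≥ t₀ one has I'(t) ≤ C(-I(t) + √(I(t))·g(t)). Then there exist constants C' > 0 and α > 0, depending only on C, such that for every t ≥ t₀, I(t) ≤ C'( I(t₀)·e^{-α(t-t₀)} + ( ∫_{t₀}^t e^{-α(t-s)} g(s) ds )² ). -/

import Mathlib

open MeasureTheory Set


lemma exp_ftc (c a b : ℝ) : ∫ s in a..b, c * Real.exp (c * s) = Real.exp (c*b) - Real.exp (c*a) := by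
  have h : ∀ s ∈ Set.uIcc a b, HasDerivAt (fun x => Real.exp (c*x)) (c * Real.exp (c*s)) s := by
    intro s _
    simpa [mul_comm] using ((hasDerivAt_id s).const_mul c).exp
  exact intervalIntegral.integral_eq_sub_of_hasDerivAt h
    (Continuous.intervalIntegrable (by continuity) a b)

lemma triangle (a b c : ℝ) (hab : a ≤ b) (f : ℝ → ℝ) (hfm : StronglyMeasurable f)
    (hf : IntegrableOn f (Set.Ioc a b)) :
    ∫ s in Set.Ioc a b, (c * Real.exp (c*s)) * ∫ u in Set.Ioc a s, f u
      = ∫ u in Set.Ioc a b, (Real.exp (c*b) - Real.exp (c*u)) * f u := by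
  set μ := volume.restrict (Set.Ioc a b) with hμ
  set k : ℝ → ℝ → ℝ := fun s u => (c * Real.exp (c*s)) * (if u ≤ s then f u else 0) with hk
  have hmeas : StronglyMeasurable (Function.uncurry k) := by
    have h1 : StronglyMeasurable (fun p : ℝ×ℝ => f p.2) := hfm.comp_measurable measurable_snd
    have h2 : MeasurableSet {p : ℝ×ℝ | p.2 ≤ p.1} := measurableSet_le measurable_snd measurable_fst
    have h3 : StronglyMeasurable (fun p : ℝ×ℝ => if p.2 ≤ p.1 then f p.2 else 0) := by
      convert h1.indicator h2 using 1
      funext p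
      simp [Set.indicator_apply]
    exact ((continuous_const.mul (Real.continuous_exp.comp (continuous_const.mul continuous_fst))).stronglyMeasurable).mul h3
  have hfint : Integrable f μ := hf
  have hsnd : Integrable (fun p : ℝ×ℝ => f p.2) (μ.prod μ) := by
    have hmap : Measure.map Prod.snd (μ.prod μ) = (μ Set.univ) • μ := Measure.map_snd_prod
    have h1 : Integrable f ((μ Set.univ) • μ) := by
      refine hfint.smul_measure ?_
      simp [hμ, Real.volume_Ioc]
    rw [← hmap] at h1
    exact (integrable_map_measure (by rw [hmap]; exact hfm.aestronglyMeasurable)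
      measurable_snd.aemeasurable).mp h1
  have hkint : Integrable (Function.uncurry k) (μ.prod μ) := by
    set M := |c| * Real.exp (|c| * max |a| |b|) with hM
    have hae : ∀ᵐ p ∂(μ.prod μ), p ∈ Set.Ioc a b ×ˢ Set.Ioc a b := by
      rw [hμ, Measure.prod_restrict]
      exact ae_restrict_mem (measurableSet_Ioc.prod measurableSet_Ioc)
    refine ((hsnd.abs).const_mul M).mono' hmeas.aestronglyMeasurable ?_
    filter_upwards [hae] with p hp
    have hp1 : |p.1| ≤ max |a| |b| := by
      have h1 := hp.1.1; have h2 := hp.1.2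
      rw [abs_le]
      constructor
      · have : -|a| ≤ a := neg_abs_le a
        have : -(max |a| |b|) ≤ -|a| := neg_le_neg (le_max_left _ _)
        nlinarith [neg_abs_le a, le_max_left |a| |b|]
      · exact le_trans h2 (le_trans (le_abs_self b) (le_max_right _ _))
    have hexp : Real.exp (c * p.1) ≤ Real.exp (|c| * max |a| |b|) := by
      apply Real.exp_le_exp.mpr
      calc c * p.1 ≤ |c * p.1| := le_abs_self _
        _ = |c| * |p.1| := abs_mul _ _
        _ ≤ |c| * max |a| |b| := mul_le_mul_of_nonneg_left hp1 (abs_nonneg c)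
    have hif : |if p.2 ≤ p.1 then f p.2 else 0| ≤ |f p.2| := by
      split_ifs <;> simp
    calc ‖Function.uncurry k p‖ = |c * Real.exp (c * p.1)| * |if p.2 ≤ p.1 then f p.2 else 0| := by
          rw [Real.norm_eq_abs]; exact abs_mul _ _
      _ ≤ (|c| * Real.exp (|c| * max |a| |b|)) * |f p.2| := by
          rw [abs_mul, abs_of_pos (Real.exp_pos _)]
          exact mul_le_mul (mul_le_mul_of_nonneg_left hexp (abs_nonneg c)) hif (abs_nonneg _)
            (by positivity)
      _ = M * |f p.2| := rfl
  have hswap := integral_integral_swap (μ := μ) (ν := μ) hkint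
  have hL : (∫ s, (∫ u, k s u ∂μ) ∂μ) = ∫ s in Set.Ioc a b, (c * Real.exp (c*s)) * ∫ u in Set.Ioc a s, f u := by
    refine setIntegral_congr_fun measurableSet_Ioc (fun s hs => ?_)
    calc ∫ u, k s u ∂μ = ∫ u, (c * Real.exp (c*s)) * (Set.Iic s).indicator f u ∂μ := by
          apply integral_congr_ae; filter_upwards with u
          by_cases h : u ≤ s <;> simp [hk, Set.indicator_apply, h]
      _ = (c * Real.exp (c*s)) * ∫ u in Set.Ioc a b ∩ Set.Iic s, f u := by
          rw [integral_const_mul, hμ, setIntegral_indicator measurableSet_Iic]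
      _ = (c * Real.exp (c*s)) * ∫ u in Set.Ioc a s, f u := by
          rw [Set.Ioc_inter_Iic, min_eq_right hs.2]
  have hR : (∫ u, (∫ s, k s u ∂μ) ∂μ) = ∫ u in Set.Ioc a b, (Real.exp (c*b) - Real.exp (c*u)) * f u := by
    refine setIntegral_congr_fun measurableSet_Ioc (fun u hu => ?_)
    have hIcc : Set.Ioc a b ∩ Set.Ici u = Set.Icc u b := by
      ext x
      simp only [Set.mem_inter_iff, Set.mem_Ioc, Set.mem_Ici, Set.mem_Icc]
      constructor
      · rintro ⟨⟨_, h2⟩, h3⟩; exact ⟨h3, h2⟩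
      · rintro ⟨h1, h2⟩; exact ⟨⟨lt_of_lt_of_le hu.1 h1, h2⟩, h1⟩
    calc ∫ s, k s u ∂μ = ∫ s, (Set.Ici u).indicator (fun s => (c * Real.exp (c*s)) * f u) s ∂μ := by
          apply integral_congr_ae; filter_upwards with s
          by_cases h : u ≤ s <;> simp [hk, Set.indicator_apply, Set.mem_Ici, h]
      _ = ∫ s in Set.Ioc a b ∩ Set.Ici u, (c * Real.exp (c*s)) * f u := by
          rw [hμ, setIntegral_indicator measurableSet_Ici]
      _ = ∫ s in Set.Ioc u b, (c * Real.exp (c*s)) * f u := by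
          rw [hIcc, ← integral_Icc_eq_integral_Ioc]
      _ = ∫ s in u..b, (c * Real.exp (c*s)) * f u := (intervalIntegral.integral_of_le hu.2).symm
      _ = (Real.exp (c*b) - Real.exp (c*u)) * f u := by
          rw [intervalIntegral.integral_mul_const, exp_ftc]
  rw [← hL, hswap, hR]

lemma prodrule (t₀ t c : ℝ) (ht : t₀ ≤ t) (f : ℝ → ℝ) (hfm : StronglyMeasurable f)
    (hf : IntegrableOn f (Set.Icc t₀ t)) (I₀ : ℝ) :
    Real.exp (c*t) * (I₀ + ∫ u in t₀..t, f u) =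
      Real.exp (c*t₀) * I₀ +
        ∫ s in t₀..t, ((c * Real.exp (c*s)) * (I₀ + ∫ u in t₀..s, f u) + Real.exp (c*s) * f s) := by
  have hfi : IntegrableOn f (Set.Ioc t₀ t) := hf.mono_set Set.Ioc_subset_Icc_self
  have hexpc : Continuous (fun s : ℝ => Real.exp (c*s)) :=
    Real.continuous_exp.comp (continuous_const.mul continuous_id)
  have hprim : ContinuousOn (fun s => (∫ u in t₀..s, f u)) (Set.Icc t₀ t) := by
    have h := intervalIntegral.continuousOn_primitive_interval (a := t₀) (b := t) (μ := volume)
      (f := f) (by rwa [Set.uIcc_of_le ht])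
    rwa [Set.uIcc_of_le ht] at h
  have hA1 : IntervalIntegrable (fun s => (c * Real.exp (c*s)) * I₀) volume t₀ t :=
    (Continuous.intervalIntegrable (by continuity) t₀ t)
  have hA2 : IntervalIntegrable (fun s => (c * Real.exp (c*s)) * (∫ u in t₀..s, f u)) volume t₀ t := by
    apply ContinuousOn.intervalIntegrable
    rw [Set.uIcc_of_le ht]
    exact ((continuous_const.mul hexpc).continuousOn).mul hprim
  have hA : IntervalIntegrable (fun s => (c * Real.exp (c*s)) * (I₀ + ∫ u in t₀..s, f u)) volume t₀ t := by
    apply ContinuousOn.intervalIntegrable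
    rw [Set.uIcc_of_le ht]
    exact ((continuous_const.mul hexpc).continuousOn).mul (continuousOn_const.add hprim)
  have hBIcc : IntegrableOn (fun s => Real.exp (c*s) * f s) (Set.Icc t₀ t) :=
    IntegrableOn.continuousOn_mul hexpc.continuousOn hf isCompact_Icc
  have hB : IntervalIntegrable (fun s => Real.exp (c*s) * f s) volume t₀ t := by
    rw [intervalIntegrable_iff_integrableOn_Icc_of_le ht]
    exact hBIcc
  rw [intervalIntegral.integral_add hA hB]
  have hsplit : (∫ s in t₀..t, (c * Real.exp (c*s)) * (I₀ + ∫ u in t₀..s, f u))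
      = (∫ s in t₀..t, (c * Real.exp (c*s)) * I₀)
        + ∫ s in t₀..t, (c * Real.exp (c*s)) * (∫ u in t₀..s, f u) := by
    rw [← intervalIntegral.integral_add hA1 hA2]
    apply intervalIntegral.integral_congr
    intro s _
    ring
  have h1 : (∫ s in t₀..t, (c * Real.exp (c*s)) * I₀) = (Real.exp (c*t) - Real.exp (c*t₀)) * I₀ := by
    rw [intervalIntegral.integral_mul_const, exp_ftc]
  have h2 : (∫ s in t₀..t, (c * Real.exp (c*s)) * (∫ u in t₀..s, f u))
      = ∫ u in Set.Ioc t₀ t, (Real.exp (c*t) - Real.exp (c*u)) * f u := by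
    rw [intervalIntegral.integral_of_le ht, ← triangle t₀ t c ht f hfm hfi]
    refine setIntegral_congr_fun measurableSet_Ioc (fun s hs => ?_)
    rw [intervalIntegral.integral_of_le hs.1.le]
  have h3 : (∫ s in t₀..t, Real.exp (c*s) * f s) = ∫ s in Set.Ioc t₀ t, Real.exp (c*s) * f s :=
    intervalIntegral.integral_of_le ht
  have hg1 : IntegrableOn (fun u => (Real.exp (c*t) - Real.exp (c*u)) * f u) (Set.Ioc t₀ t) :=
    (IntegrableOn.continuousOn_mul (by fun_prop) hf isCompact_Icc).mono_set Set.Ioc_subset_Icc_self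
  have hg2 : IntegrableOn (fun u => Real.exp (c*u) * f u) (Set.Ioc t₀ t) :=
    hBIcc.mono_set Set.Ioc_subset_Icc_self
  have h4 : (∫ u in Set.Ioc t₀ t, (Real.exp (c*t) - Real.exp (c*u)) * f u)
      + (∫ u in Set.Ioc t₀ t, Real.exp (c*u) * f u) = Real.exp (c*t) * ∫ u in Set.Ioc t₀ t, f u := by
    rw [← integral_add hg1 hg2, ← integral_const_mul]
    refine setIntegral_congr_fun measurableSet_Ioc (fun u _ => ?_)
    ring
  rw [hsplit, h1, h2, h3, intervalIntegral.integral_of_le ht]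
  linarith [h4]

/-- Analytic core of Proposition 5.1: from the differential inequality
`I'(t) ≤ C(-I(t) + √(I(t)) g(t))` (a.e., with `I` nonnegative and absolutely continuous,
encoded by `I(t) = I(t₀) + ∫_{t₀}^t i` where `i` is the a.e. derivative) one obtains, with
constants `C' > 0` and `α > 0` depending only on `C`,
`I(t) ≤ C'(I(t₀) e^{-α(t-t₀)} + (∫_{t₀}^t e^{-α(t-s)} g(s) ds)²)`. -/
lemma sqrt_exp' (z : ℝ) : Real.sqrt (Real.exp z) = Real.exp (z/2) := by
  rw [show Real.exp z = (Real.exp (z/2))^2 by rw [sq, ← Real.exp_add]; ring_nf]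
  exact Real.sqrt_sq (Real.exp_nonneg _)

theorem stmt7 (C : ℝ) (hC : 0 < C) :
    ∃ C' > (0:ℝ), ∃ α > (0:ℝ), ∀ (t₀ : ℝ) (I g i : ℝ → ℝ),
      (∀ t ≥ t₀, 0 ≤ I t) → (∀ t ≥ t₀, 0 ≤ g t) →
      LocallyIntegrableOn g (Set.Ici t₀) →
      LocallyIntegrableOn i (Set.Ici t₀) →
      (∀ t ≥ t₀, I t = I t₀ + ∫ s in t₀..t, i s) →
      (∀ᵐ t ∂(volume.restrict (Set.Ici t₀)),
        i t ≤ C * (-I t + Real.sqrt (I t) * g t)) →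
      ∀ t ≥ t₀, I t ≤ C' * (I t₀ * Real.exp (-α * (t - t₀)) +
        (∫ s in t₀..t, Real.exp (-α * (t - s)) * g s) ^ 2) := by
  refine ⟨2 + 2*C^2, by positivity, C/2, by positivity, ?_⟩
  intro t₀ I g i hI hg hgloc hiloc hIeq hae
  obtain ⟨f, hfm, hfae⟩ : ∃ f : ℝ → ℝ, StronglyMeasurable f ∧ i =ᵐ[volume.restrict (Set.Ici t₀)] f :=
    ⟨hiloc.aestronglyMeasurable.mk i, hiloc.aestronglyMeasurable.stronglyMeasurable_mk,
      hiloc.aestronglyMeasurable.ae_eq_mk⟩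
  have hfInt : ∀ x ≥ t₀, IntegrableOn f (Set.Icc t₀ x) := by
    intro x hx
    have h1 : IntegrableOn i (Set.Icc t₀ x) :=
      hiloc.integrableOn_compact_subset (Set.Icc_subset_Ici_self) isCompact_Icc
    exact h1.congr (ae_restrict_of_ae_restrict_of_subset Set.Icc_subset_Ici_self hfae)
  have hIf : ∀ x ≥ t₀, I x = I t₀ + ∫ u in t₀..x, f u := by
    intro x hx
    rw [hIeq x hx]
    congr 1
    rw [intervalIntegral.integral_of_le hx, intervalIntegral.integral_of_le hx]
    exact integral_congr_ae (ae_restrict_of_ae_restrict_of_subset (Set.Ioc_subset_Icc_self.trans Set.Icc_subset_Ici_self) hfae)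
  intro t ht
  have hgt : IntegrableOn g (Set.Icc t₀ t) :=
    hgloc.integrableOn_compact_subset Set.Icc_subset_Ici_self isCompact_Icc
  have hexpc : Continuous fun s : ℝ => Real.exp (C*s) :=
    Real.continuous_exp.comp (continuous_const.mul continuous_id)
  have hprimcont : ContinuousOn (fun x => I t₀ + ∫ u in t₀..x, f u) (Set.Icc t₀ t) := by
    have h := intervalIntegral.continuousOn_primitive_interval (a := t₀) (b := t) (μ := volume)
      (f := f) (by rw [Set.uIcc_of_le ht]; exact hfInt t ht)
    rw [Set.uIcc_of_le ht] at h
    exact continuousOn_const.add h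
  have hIcont : ContinuousOn I (Set.Icc t₀ t) :=
    hprimcont.congr (fun x hx => hIf x hx.1)
  set h : ℝ → ℝ := fun s => (C * Real.exp (C*s) * Real.sqrt (I s)) * g s with hh
  have hhint : IntegrableOn h (Set.Icc t₀ t) := by
    apply IntegrableOn.continuousOn_mul _ hgt isCompact_Icc
    exact (continuousOn_const.mul hexpc.continuousOn).mul
      (Real.continuous_sqrt.comp_continuousOn hIcont)
  -- Step A
  have stepA : ∀ x ∈ Set.Icc t₀ t, Real.exp (C*x) * I x ≤
      Real.exp (C*t₀) * I t₀ + ∫ s in t₀..x, h s := by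
    intro x hx
    have hx0 : t₀ ≤ x := hx.1
    have hpr := prodrule t₀ x C hx0 f hfm (hfInt x hx0) (I t₀)
    rw [← hIf x hx0] at hpr
    rw [hpr]
    apply add_le_add (le_refl _)
    have hA : IntervalIntegrable
        (fun s => (C * Real.exp (C*s)) * (I t₀ + ∫ u in t₀..s, f u) + Real.exp (C*s) * f s)
        volume t₀ x := by
      apply IntervalIntegrable.add
      · apply ContinuousOn.intervalIntegrable
        rw [Set.uIcc_of_le hx0]
        exact ((continuousOn_const.mul hexpc.continuousOn).mul
          (hprimcont.mono (Set.Icc_subset_Icc_right hx.2)))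
      · rw [intervalIntegrable_iff_integrableOn_Icc_of_le hx0]
        exact IntegrableOn.continuousOn_mul hexpc.continuousOn (hfInt x hx0) isCompact_Icc
    have hB : IntervalIntegrable h volume t₀ x := by
      rw [intervalIntegrable_iff_integrableOn_Icc_of_le hx0]
      exact hhint.mono_set (Set.Icc_subset_Icc_right hx.2)
    apply intervalIntegral.integral_mono_ae_restrict hx0 hA hB
    have h1 : ∀ᵐ s ∂(volume.restrict (Set.Icc t₀ x)), i s ≤ C * (-I s + Real.sqrt (I s) * g s) :=
      ae_restrict_of_ae_restrict_of_subset Set.Icc_subset_Ici_self hae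
    have h2 : ∀ᵐ s ∂(volume.restrict (Set.Icc t₀ x)), i s = f s :=
      ae_restrict_of_ae_restrict_of_subset Set.Icc_subset_Ici_self hfae
    filter_upwards [h1, h2, ae_restrict_mem measurableSet_Icc] with s hs1 hs2 hs3
    rw [← hIf s hs3.1, ← hs2, hh]
    simp only
    have hep : (0:ℝ) < Real.exp (C*s) := Real.exp_pos _
    nlinarith [mul_le_mul_of_nonneg_left hs1 hep.le]
  -- Step B
  set u : ℝ → ℝ := fun x => Real.sqrt (Real.exp (C*x) * I x) with hu
  have husq : ∀ x ∈ Set.Icc t₀ t, u x ^ 2 = Real.exp (C*x) * I x := fun x hx =>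
    Real.sq_sqrt (mul_nonneg (Real.exp_nonneg _) (hI x hx.1))
  have hucont : ContinuousOn u (Set.Icc t₀ t) :=
    Real.continuous_sqrt.comp_continuousOn (hexpc.continuousOn.mul hIcont)
  obtain ⟨z, hz, hzmax⟩ := isCompact_Icc.exists_isMaxOn (Set.nonempty_Icc.mpr ht) hucont
  set S := u z with hS
  have hS0 : 0 ≤ S := Real.sqrt_nonneg _
  have hmax : ∀ x ∈ Set.Icc t₀ t, u x ≤ S := fun x hx => hzmax hx
  set B := ∫ s in t₀..t, (C * Real.exp (C*s/2)) * g s with hB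
  have hcoefc : Continuous fun s : ℝ => C * Real.exp (C*s/2) := by
    exact continuous_const.mul
      (Real.continuous_exp.comp ((continuous_const.mul continuous_id).div_const 2))
  have hq_int : IntegrableOn (fun s => (C * Real.exp (C*s/2)) * g s) (Set.Icc t₀ t) :=
    IntegrableOn.continuousOn_mul hcoefc.continuousOn hgt isCompact_Icc
  have hq_ii : IntervalIntegrable (fun s => (C * Real.exp (C*s/2)) * g s) volume t₀ t := by
    rw [intervalIntegrable_iff_integrableOn_Icc_of_le ht]; exact hq_int
  have hB0 : 0 ≤ B := by
    rw [hB]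
    apply intervalIntegral.integral_nonneg ht
    intro s hs
    exact mul_nonneg (by positivity) (hg s hs.1)
  have hhu : ∀ s ∈ Set.Icc t₀ t, h s = ((C * Real.exp (C*s/2)) * g s) * u s := by
    intro s hs
    rw [hh, hu]
    simp only
    rw [Real.sqrt_mul (Real.exp_nonneg _), sqrt_exp',
      show Real.exp (C*s) = Real.exp (C*s/2) * Real.exp (C*s/2) from by rw [← Real.exp_add]; ring_nf]
    ring
  have key : S^2 ≤ Real.exp (C*t₀) * I t₀ + S * B := by
    have h1 := stepA z hz
    have hIcz : Set.Icc t₀ z ⊆ Set.Icc t₀ t := Set.Icc_subset_Icc_right hz.2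
    have hint1 : IntervalIntegrable h volume t₀ z := by
      rw [intervalIntegrable_iff_integrableOn_Icc_of_le hz.1]
      exact hhint.mono_set hIcz
    have hint2 : IntervalIntegrable (fun s => ((C * Real.exp (C*s/2)) * g s) * S) volume t₀ z := by
      rw [intervalIntegrable_iff_integrableOn_Icc_of_le hz.1]
      exact (hq_int.mono_set hIcz).mul_const S
    have h2 : (∫ s in t₀..z, h s) ≤ ∫ s in t₀..z, ((C * Real.exp (C*s/2)) * g s) * S := by
      apply intervalIntegral.integral_mono_on hz.1 hint1 hint2
      intro s hs
      have hs' : s ∈ Set.Icc t₀ t := hIcz hs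
      rw [hhu s hs']
      exact mul_le_mul_of_nonneg_left (hmax s hs')
        (mul_nonneg (by positivity) (hg s hs.1))
    have h3 : (∫ s in t₀..z, ((C * Real.exp (C*s/2)) * g s) * S)
        = (∫ s in t₀..z, (C * Real.exp (C*s/2)) * g s) * S :=
      intervalIntegral.integral_mul_const _ _
    have h4 : (∫ s in t₀..z, (C * Real.exp (C*s/2)) * g s) ≤ B := by
      rw [hB]
      apply intervalIntegral.integral_mono_interval le_rfl hz.1 hz.2 _ hq_ii
      filter_upwards [ae_restrict_mem measurableSet_Ioc] with s hs
      exact mul_nonneg (by positivity) (hg s (le_of_lt hs.1))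
    calc S^2 = Real.exp (C*z) * I z := husq z hz
      _ ≤ Real.exp (C*t₀) * I t₀ + ∫ s in t₀..z, h s := h1
      _ ≤ Real.exp (C*t₀) * I t₀ + (∫ s in t₀..z, (C * Real.exp (C*s/2)) * g s) * S := by
          rw [← h3] at *; linarith
      _ ≤ Real.exp (C*t₀) * I t₀ + S * B := by
          rw [mul_comm S B]
          exact add_le_add (le_refl _) (mul_le_mul_of_nonneg_right h4 hS0)
  have ha0 : 0 ≤ Real.exp (C*t₀) * I t₀ := mul_nonneg (Real.exp_nonneg _) (hI t₀ le_rfl)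
  set a := Real.sqrt (Real.exp (C*t₀) * I t₀) with haa
  have ha2 : a^2 = Real.exp (C*t₀) * I t₀ := Real.sq_sqrt ha0
  have han : 0 ≤ a := Real.sqrt_nonneg _
  have hSle : S ≤ a + B := by
    by_contra hcon
    push_neg at hcon
    nlinarith
  have hut : u t ≤ a + B := le_trans (hmax t ⟨ht, le_rfl⟩) hSle
  have hfin : Real.exp (C*t) * I t ≤ 2*(Real.exp (C*t₀) * I t₀) + 2*B^2 := by
    have h6 := husq t ⟨ht, le_rfl⟩
    have h7 : 0 ≤ u t := Real.sqrt_nonneg _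
    have h8 : u t ^ 2 ≤ (a + B)^2 := pow_le_pow_left₀ h7 hut 2
    have h9 : (a + B)^2 ≤ 2*a^2 + 2*B^2 := by nlinarith [sq_nonneg (a - B)]
    linarith [h8, h9, h6, ha2]
  -- Final conversion
  set J := ∫ s in t₀..t, Real.exp (-(C/2) * (t - s)) * g s with hJ
  have e1 : Real.exp (-(C/2)*t) * B = C * J := by
    rw [hB, hJ, ← intervalIntegral.integral_const_mul, ← intervalIntegral.integral_const_mul]
    apply intervalIntegral.integral_congr
    intro s _
    simp only
    rw [show -(C/2)*(t-s) = -(C/2)*t + C*s/2 by ring, Real.exp_add]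
    ring
  have h5 : I t ≤ 2 * I t₀ * Real.exp (-C*(t-t₀)) + 2*(C*J)^2 := by
    have hrw : I t = Real.exp (-(C*t)) * (Real.exp (C*t) * I t) := by
      rw [← mul_assoc, ← Real.exp_add]; simp
    rw [hrw]
    have step : Real.exp (-(C*t)) * (Real.exp (C*t) * I t)
        ≤ Real.exp (-(C*t)) * (2*(Real.exp (C*t₀) * I t₀) + 2*B^2) :=
      mul_le_mul_of_nonneg_left hfin (Real.exp_nonneg _)
    have id1 : Real.exp (-(C*t)) * Real.exp (C*t₀) = Real.exp (-C*(t-t₀)) := by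
      rw [← Real.exp_add]; ring_nf
    have id2 : Real.exp (-(C*t)) = Real.exp (-(C/2)*t)^2 := by
      rw [sq, ← Real.exp_add]; ring_nf
    calc Real.exp (-(C*t)) * (Real.exp (C*t) * I t)
        ≤ Real.exp (-(C*t)) * (2*(Real.exp (C*t₀) * I t₀) + 2*B^2) := step
      _ = 2 * I t₀ * (Real.exp (-(C*t)) * Real.exp (C*t₀)) + 2*(Real.exp (-(C/2)*t) * B)^2 := by
          rw [id2]; ring
      _ = 2 * I t₀ * Real.exp (-C*(t-t₀)) + 2*(C*J)^2 := by rw [id1, e1]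
  have e2 : Real.exp (-C*(t-t₀)) ≤ Real.exp (-(C/2)*(t-t₀)) := by
    apply Real.exp_le_exp.mpr
    nlinarith [sub_nonneg.mpr ht]
  have hI0 : 0 ≤ I t₀ := hI t₀ le_rfl
  have hmul := mul_le_mul_of_nonneg_left e2 hI0
  have expand : (2+2*C^2) * (I t₀ * Real.exp (-(C/2)*(t-t₀)) + J^2)
      = 2*(I t₀ * Real.exp (-(C/2)*(t-t₀))) + 2*(C^2*(I t₀ * Real.exp (-(C/2)*(t-t₀))))
        + 2*J^2 + 2*(C^2*J^2) := by ring
  have k2 : 2*(C*J)^2 = 2*(C^2*J^2) := by ring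
  have n1 : 0 ≤ C^2*(I t₀ * Real.exp (-(C/2)*(t-t₀))) :=
    mul_nonneg (sq_nonneg C) (mul_nonneg hI0 (Real.exp_nonneg _))
  have n2 : 0 ≤ J^2 := sq_nonneg J
  rw [expand]
  linarith [h5, hmul, k2, n1, n2]
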